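/- Sharpness of the hitting-time amplification: for every integer M ≥ 1 and every ε > 0, there exists a deterministic stochastic shortest path problem, an initial state x, and a bounded function V with V(t) = 0 and ‖V − V*‖∞ ≤ ε, such that the rollout policy π_R built from V is proper from x, the hitting time satisfies E[τ] = M + 1, and J^{π_R}(x) − V*(x) ≥ (ε/4) · E[τ]. Concretely, one may take states {0, 1, …, M, t}, initial state 0; at each state i < M the control s moves to t with cost 0 and the control c moves to i+1 with cost ε/2; at state M the only control moves to t with cost 0; t is absorbing with zero cost; then V*(i) = 0 for all i, and with V(i) = −ε for i = 0,…,M and V(t) = 0, the rollout policy selects c at every i < M, is proper with τ = M + 1 deterministically, and J^{π_R}(0) = Mε/2 ≥ (ε/4)(M+1). -/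

import Mathlib

open MeasureTheory ProbabilityTheory Filter
open scoped ENNReal

/-- Deterministic closed-loop trajectory: `x₀ = x`, `x_{k+1} = F(x_k, π(x_k))`. -/
def detTraj {X U : Type*} (F : X → U → X) (π : X → U) (x : X) : ℕ → X
  | 0 => x
  | k + 1 => F (detTraj F π x k) (π (detTraj F π x k))

theorem trajAux (M : ℕ) : ∀ k (hk : k ≤ M), detTraj
    (fun (y : Option (Fin (M+1))) (u : Bool) => match y, u with
      | none, _ => none
      | some i, false => none
      | some i, true => if h : (i : ℕ) < M then some ⟨(i : ℕ) + 1, by omega⟩ else none)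
    (fun _ => true) (some ⟨0, Nat.succ_pos M⟩) k = some ⟨k, Nat.lt_succ_of_le hk⟩ := by
  intro k
  induction k with
  | zero => intro _; rfl
  | succ n ih =>
    intro hk
    have hn : n ≤ M := by omega
    rw [detTraj, ih hn]
    simp only
    rw [dif_pos (show n < M by omega)]

/-- Sharpness of the hitting-time amplification: for every `M ≥ 1` and `ε > 0` there is a
deterministic SSP, an initial state `x`, and a surrogate `V` with `V(t) = 0` and
`‖V - V*‖∞ ≤ ε`, such that the rollout policy `π_R` built from `V` is proper from `x`, the
hitting time is exactly `M + 1` (so `E[τ] = M + 1`), and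
`J^{π_R}(x) - V*(x) ≥ (ε/4) · E[τ]`. -/
theorem rollout_hitting_time_amplification_sharp
    (M : ℕ) (hM : 1 ≤ M) (ε : ℝ) (hε : 0 < ε) :
    ∃ (X U : Type) (_ : Finite X) (_ : Finite U) (t : X) (Ua : X → Set U)
      (F : X → U → X) (f : X → U → ℝ) (Vstar V : X → ℝ) (πR : X → U) (x : X),
      (∀ y, (Ua y).Nonempty) ∧ (∀ y u, 0 ≤ f y u) ∧
      (∀ u, F t u = t) ∧ (∀ u, f t u = 0) ∧
      -- V* : the optimal value, satisfying the deterministic Bellman equation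
      Vstar t = 0 ∧
      (∀ y, y ≠ t → Vstar y = ⨅ u : Ua y, (f y (u : U) + Vstar (F y (u : U)))) ∧
      -- the value surrogate V
      V t = 0 ∧ (∀ y, |V y - Vstar y| ≤ ε) ∧
      -- π_R : a rollout (one-step greedy) policy for V
      (∀ y, πR y ∈ Ua y) ∧
      (∀ y, y ≠ t → ∀ u ∈ Ua y, f y (πR y) + V (F y (πR y)) ≤ f y u + V (F y u)) ∧
      -- the closed loop from x is proper with hitting time exactly M + 1
      detTraj F πR x (M + 1) = t ∧ (∀ k < M + 1, detTraj F πR x k ≠ t) ∧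
      -- suboptimality at least (ε/4) · E[τ]
      ε / 4 * (M + 1)
        ≤ (∑ k ∈ Finset.range (M + 1),
            f (detTraj F πR x k) (πR (detTraj F πR x k))) - Vstar x := by
  classical
  refine ⟨Option (Fin (M + 1)), Bool, inferInstance, inferInstance, none,
    fun _ => Set.univ,
    (fun y u => match y, u with
      | none, _ => none
      | some i, false => none
      | some i, true => if h : (i : ℕ) < M then some ⟨(i : ℕ) + 1, by omega⟩ else none),
    (fun y u => match y, u with
      | none, _ => 0
      | some i, false => 0
      | some i, true => if (i : ℕ) < M then ε / 2 else 0),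
    (fun _ => 0),
    (fun y => match y with | none => 0 | some _ => -ε),
    (fun _ => true), some ⟨0, by omega⟩, ?_, ?_, ?_, ?_, ?_, ?_, ?_, ?_, ?_, ?_, ?_, ?_, ?_⟩
  · exact fun y => ⟨true, trivial⟩
  · rintro (_ | i) (_ | _) <;> simp <;> positivity
  · intro u; rfl
  · intro u; rfl
  · rfl
  · rintro y hy
    refine le_antisymm ?_ ?_
    · refine le_ciInf fun u => ?_
      rcases y with _ | i <;> rcases u with ⟨(_ | _), hu⟩ <;> simp <;> positivity
    · have : (⨅ u : (Set.univ : Set Bool), ((fun y u => match y, u with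
          | none, _ => (0:ℝ)
          | some i, false => 0
          | some i, true => if (i : ℕ) < M then ε / 2 else 0) y (u : Bool) + 0)) ≤
          ((fun y u => match y, u with
          | none, _ => (0:ℝ)
          | some i, false => 0
          | some i, true => if (i : ℕ) < M then ε / 2 else 0) y false + 0) :=
        ciInf_le (Set.Finite.bddBelow (Set.finite_range _)) (⟨false, trivial⟩ : (Set.univ : Set Bool))
      refine this.trans ?_
      rcases y with _ | i <;> simp
  · rfl
  · rintro (_ | i) <;> simp [abs_of_nonneg hε.le, le_refl] <;> linarith
  · exact fun y => trivial
  · rintro (_ | i) hy u _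
    · exact absurd rfl hy
    · rcases u with _ | _
      · by_cases h : (i : ℕ) < M <;> simp [h] <;> linarith
      · exact le_rfl
  case refine_11 =>
    rw [detTraj, trajAux M M le_rfl]
    simp
  case refine_12 =>
    intro k hk
    rw [trajAux M k (by omega)]
    simp
  case refine_13 =>
    have h1 : ∀ k ∈ Finset.range (M + 1),
        ((fun (y : Option (Fin (M+1))) (u : Bool) => match y, u with
          | none, _ => (0:ℝ)
          | some i, false => 0
          | some i, true => if (i : ℕ) < M then ε / 2 else 0)
          (detTraj (fun y u => match y, u with
            | none, _ => none
            | some i, false => none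
            | some i, true => if h : (i : ℕ) < M then some ⟨(i : ℕ) + 1, by omega⟩ else none)
            (fun _ => true) (some ⟨0, by omega⟩) k) true)
        = if k < M then ε / 2 else 0 := by
      intro k hk
      rw [trajAux M k (by have := Finset.mem_range.mp hk; omega)]
    rw [Finset.sum_congr rfl h1, Finset.sum_range_succ, if_neg (lt_irrefl M)]
    have h2 : ∀ k ∈ Finset.range M, (if k < M then ε / 2 else 0) = ε / 2 := by
      intro k hk
      rw [if_pos (Finset.mem_range.mp hk)]
    rw [Finset.sum_congr rfl h2, Finset.sum_const, nsmul_eq_mul, Finset.card_range]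
    have hM' : (1:ℝ) ≤ M := by exact_mod_cast hM
    simp only; nlinarith [hε.le]
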